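/- Consider gradient flow on a depth-L matrix factorization (L ≥ 2) for the 2×2 matrix-completion loss with balanced initialization, and assume det(W_{L:1}(0)) > 0. Then for any quasi-norm N on 2×2 real matrices with weakened-triangle constant c ≥ 1, for every t ≥ 0 with ℓ(t) > 0, N(W_{L:1}(t)) ≥ a_N/√(ℓ(t)) − b_N, where a_N = N(e₁e₁ᵀ)/(√2·c), b_N = max{√2·a_N, 8c²·max_{i,j ∈ {1,2}} N(e_i e_jᵀ)}, and e₁, e₂ are the standard basis vectors of ℝ². -/

import Mathlib

open Matrix

/-- The matrix-completion loss `ℓ(W) = ½[(W₁₂−1)² + (W₂₁−1)² + W₂₂²]`. -/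
noncomputable def mcLoss (A : Matrix (Fin 2) (Fin 2) ℝ) : ℝ :=
  (1 / 2) * ((A 0 1 - 1) ^ 2 + (A 1 0 - 1) ^ 2 + A 1 1 ^ 2)

/-- The gradient of the loss: `∇ℓ(W) = [[0, W₁₂ − 1], [W₂₁ − 1, W₂₂]]`. -/
noncomputable def mcGrad (A : Matrix (Fin 2) (Fin 2) ℝ) : Matrix (Fin 2) (Fin 2) ℝ :=
  !![0, A 0 1 - 1; A 1 0 - 1, A 1 1]

section Helpers
open Set

set_option linter.unusedSectionVars false
set_option linter.unusedVariables false

private lemma chain_aux (c na x1 x2 u v w s : ℝ) (hc : 0 ≤ c)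
    (t1 : s ≤ c * (na + x1)) (t2 : x1 ≤ c * (u + x2)) (t3 : x2 ≤ c * (v + w)) :
    s ≤ c * na + c ^ 2 * u + c ^ 3 * v + c ^ 3 * w := by
  have h2 : c * x1 ≤ c * (c * (u + x2)) := mul_le_mul_of_nonneg_left t2 hc
  have h3 : (c * c) * x2 ≤ (c * c) * (c * (v + w)) :=
    mul_le_mul_of_nonneg_left t3 (mul_nonneg hc hc)
  nlinarith [t1, h2, h3]

private lemma bnd_aux (c na M s u v w : ℝ) (hc : 1 ≤ c) (hM : 0 ≤ M)
    (hu : u ≤ 2 * M) (hv : v ≤ 2 * M) (hw : w ≤ M)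
    (hu0 : 0 ≤ u) (hv0 : 0 ≤ v) (hw0 : 0 ≤ w)
    (hs : s ≤ c * na + c ^ 2 * u + c ^ 3 * v + c ^ 3 * w) :
    s ≤ c * na + 5 * c ^ 3 * M := by
  have hc0 : (0:ℝ) < c := lt_of_lt_of_le one_pos hc
  have hcc : c ^ 2 ≤ c ^ 3 := pow_le_pow_right₀ hc (by norm_num)
  have h1a : c ^ 2 * u ≤ c ^ 2 * (2 * M) := mul_le_mul_of_nonneg_left hu (pow_nonneg (le_of_lt hc0) 2)
  have h1b : c ^ 2 * (2 * M) ≤ c ^ 3 * (2 * M) :=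
    mul_le_mul_of_nonneg_right hcc (by linarith)
  have h2 : c ^ 3 * v ≤ c ^ 3 * (2 * M) := mul_le_mul_of_nonneg_left hv (pow_nonneg (le_of_lt hc0) 3)
  have h3 : c ^ 3 * w ≤ c ^ 3 * M := mul_le_mul_of_nonneg_left hw (pow_nonneg (le_of_lt hc0) 3)
  linarith

set_option maxHeartbeats 1000000 in
lemma mc_final (A : Matrix (Fin 2) (Fin 2) ℝ) (hdA : 0 < A.det)
    (hl : 0 < mcLoss A)
    (N : Matrix (Fin 2) (Fin 2) ℝ → ℝ) (c : ℝ) (hc : 1 ≤ c)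
    (hN_nonneg : ∀ B, 0 ≤ N B)
    (hN_hom : ∀ (α : ℝ) (B), N (α • B) = |α| * N B)
    (hN_tri : ∀ B B', N (B + B') ≤ c * (N B + N B')) :
    N (Matrix.single 0 0 (1:ℝ)) / (Real.sqrt 2 * c) / Real.sqrt (mcLoss A)
      - max (Real.sqrt 2 * (N (Matrix.single 0 0 (1:ℝ)) / (Real.sqrt 2 * c)))
          (8 * c ^ 2 * max (max (N (Matrix.single 0 0 (1:ℝ))) (N (Matrix.single 0 1 (1:ℝ))))
              (max (N (Matrix.single 1 0 (1:ℝ))) (N (Matrix.single 1 1 (1:ℝ))))) ≤ N A := by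
  set N00 := N (Matrix.single 0 0 (1:ℝ)) with hN00
  set N01 := N (Matrix.single 0 1 (1:ℝ)) with hN01
  set N10 := N (Matrix.single 1 0 (1:ℝ)) with hN10
  set N11 := N (Matrix.single 1 1 (1:ℝ)) with hN11
  set M : ℝ := max (max N00 N01) (max N10 N11) with hM
  set a : ℝ := N00 / (Real.sqrt 2 * c) with ha
  set b : ℝ := max (Real.sqrt 2 * a) (8 * c ^ 2 * M) with hb
  have hc0 : (0:ℝ) < c := lt_of_lt_of_le one_pos hc
  have hN000 : 0 ≤ N00 := hN_nonneg _
  have hM0 : 0 ≤ M := le_trans hN000 (le_trans (le_max_left _ _) (le_max_left _ _))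
  have hNM : N00 ≤ M ∧ N01 ≤ M ∧ N10 ≤ M ∧ N11 ≤ M := by
    refine ⟨?_, ?_, ?_, ?_⟩ <;>
      [exact le_trans (le_max_left _ _) (le_max_left _ _);
       exact le_trans (le_max_right _ _) (le_max_left _ _);
       exact le_trans (le_max_left _ _) (le_max_right _ _);
       exact le_trans (le_max_right _ _) (le_max_right _ _)]
  have hs2 : (0:ℝ) < Real.sqrt 2 := Real.sqrt_pos.mpr (by norm_num)
  have ha0 : 0 ≤ a := div_nonneg hN000 (le_of_lt (mul_pos hs2 hc0))
  have hsl : 0 < Real.sqrt (mcLoss A) := Real.sqrt_pos.mpr hl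
  by_cases hcase : 1 ≤ 2 * mcLoss A
  · -- large loss : LHS ≤ 0
    have h1 : a / Real.sqrt (mcLoss A) ≤ Real.sqrt 2 * a := by
      rw [div_le_iff₀ hsl]
      have h2 : 1 ≤ Real.sqrt 2 * Real.sqrt (mcLoss A) := by
        rw [← Real.sqrt_mul (by norm_num)]
        have := Real.sqrt_le_sqrt hcase
        simpa using le_trans (by norm_num [Real.sqrt_one]) this
      nlinarith [mul_nonneg ha0 (le_of_lt hsl)]
    have : a / Real.sqrt (mcLoss A) - b ≤ 0 := by
      have : Real.sqrt 2 * a ≤ b := le_max_left _ _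
      linarith
    exact le_trans this (hN_nonneg A)
  · push_neg at hcase
    set ε : ℝ := Real.sqrt (2 * mcLoss A) with hε
    have hε0 : 0 < ε := Real.sqrt_pos.mpr (by linarith)
    have hε1 : ε < 1 := by
      rw [hε, show (1:ℝ) = Real.sqrt 1 by simp]
      exact Real.sqrt_lt_sqrt (by linarith) hcase
    have hεsq : ε ^ 2 = 2 * mcLoss A := Real.sq_sqrt (by linarith)
    have key : ∀ x : ℝ, x ^ 2 ≤ 2 * mcLoss A → |x| ≤ ε := by
      intro x hx
      have : |x| = Real.sqrt (x ^ 2) := (Real.sqrt_sq_eq_abs x).symm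
      rw [this]; exact Real.sqrt_le_sqrt hx
    have e01 : |A 0 1 - 1| ≤ ε := key _ (by simp only [mcLoss] at hl ⊢; nlinarith [sq_nonneg (A 1 0 - 1), sq_nonneg (A 1 1)])
    have e10 : |A 1 0 - 1| ≤ ε := key _ (by simp only [mcLoss] at hl ⊢; nlinarith [sq_nonneg (A 0 1 - 1), sq_nonneg (A 1 1)])
    have e11 : |A 1 1| ≤ ε := key _ (by simp only [mcLoss] at hl ⊢; nlinarith [sq_nonneg (A 0 1 - 1), sq_nonneg (A 1 0 - 1)])
    have hA01 : 1 - ε ≤ A 0 1 := by have := abs_le.mp e01; linarith [this.1]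
    have hA10 : 1 - ε ≤ A 1 0 := by have := abs_le.mp e10; linarith [this.1]
    have hA01' : A 0 1 ≤ 1 + ε := by have := abs_le.mp e01; linarith [this.2]
    have hA10' : A 1 0 ≤ 1 + ε := by have := abs_le.mp e10; linarith [this.2]
    have hdet2 : A.det = A 0 0 * A 1 1 - A 0 1 * A 1 0 := Matrix.det_fin_two A
    have hprodpos : (1 - ε) ^ 2 ≤ A 0 1 * A 1 0 := by
      rw [sq]
      exact mul_le_mul hA01 hA10 (by linarith) (by linarith [hA01, hε1])
    have h0011 : (1 - ε) ^ 2 < A 0 0 * A 1 1 := by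
      have : A 0 0 * A 1 1 = A.det + A 0 1 * A 1 0 := by rw [hdet2]; ring
      linarith
    have habs : (1 - ε) ^ 2 ≤ |A 0 0| * |A 1 1| := by
      rw [← abs_mul]; exact le_trans (le_of_lt h0011) (le_abs_self _)
    have hA11ne : |A 1 1| ≠ 0 := by
      intro h; rw [h, mul_zero] at habs
      have : 0 < (1 - ε)^2 := pow_pos (by linarith) 2
      linarith
    have hA11pos : 0 < |A 1 1| := lt_of_le_of_ne (abs_nonneg _) (Ne.symm hA11ne)
    have hA00 : (1 - ε) ^ 2 / ε ≤ |A 0 0| := by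
      rw [div_le_iff₀ hε0]
      calc (1 - ε)^2 ≤ |A 0 0| * |A 1 1| := habs
        _ ≤ |A 0 0| * ε := by
            exact mul_le_mul_of_nonneg_left e11 (abs_nonneg _)
    have hA00' : 1 / ε - 2 ≤ |A 0 0| := by
      have : 1 / ε - 2 + ε = (1 - ε)^2 / ε := by field_simp; ring
      nlinarith [hA00]
    -- quasi-norm decomposition
    have hdecomp : (A 0 0) • Matrix.single 0 0 (1:ℝ) =
        A + ((-(A 0 1)) • Matrix.single 0 1 (1:ℝ) +
          ((-(A 1 0)) • Matrix.single 1 0 (1:ℝ) + (-(A 1 1)) • Matrix.single 1 1 (1:ℝ))) := by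
      ext i j
      fin_cases i <;> fin_cases j <;>
        simp [Matrix.single, Matrix.add_apply, Matrix.smul_apply]
    have step : |A 0 0| * N00 ≤ c * N A + c^2 * (|A 0 1| * N01) + c^3 * (|A 1 0| * N10)
        + c^3 * (|A 1 1| * N11) := by
      have t1 := hN_tri A ((-(A 0 1)) • Matrix.single 0 1 (1:ℝ) +
          ((-(A 1 0)) • Matrix.single 1 0 (1:ℝ) + (-(A 1 1)) • Matrix.single 1 1 (1:ℝ)))
      have t2 := hN_tri ((-(A 0 1)) • Matrix.single 0 1 (1:ℝ))
          ((-(A 1 0)) • Matrix.single 1 0 (1:ℝ) + (-(A 1 1)) • Matrix.single 1 1 (1:ℝ))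
      have t3 := hN_tri ((-(A 1 0)) • Matrix.single 1 0 (1:ℝ)) ((-(A 1 1)) • Matrix.single 1 1 (1:ℝ))
      have e1 : N ((A 0 0) • Matrix.single 0 0 (1:ℝ)) = |A 0 0| * N00 := hN_hom _ _
      have e2 : N ((-(A 0 1)) • Matrix.single 0 1 (1:ℝ)) = |A 0 1| * N01 := by
        rw [hN_hom]; simp [hN01]
      have e3 : N ((-(A 1 0)) • Matrix.single 1 0 (1:ℝ)) = |A 1 0| * N10 := by
        rw [hN_hom]; simp [hN10]
      have e4 : N ((-(A 1 1)) • Matrix.single 1 1 (1:ℝ)) = |A 1 1| * N11 := by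
        rw [hN_hom]; simp [hN11]
      rw [← hdecomp, e1] at t1
      rw [e2] at t2
      rw [e3] at t3
      rw [e4] at t3
      exact chain_aux c (N A) _ _ _ _ _ _ (le_of_lt hc0) t1 t2 t3
    have hbound : |A 0 0| * N00 ≤ c * N A + 5 * c^3 * M := by
      have b1 : |A 0 1| ≤ 2 := abs_le.mpr ⟨by linarith, by linarith⟩
      have b2 : |A 1 0| ≤ 2 := abs_le.mpr ⟨by linarith, by linarith⟩
      have b3 : |A 1 1| ≤ 1 := le_trans e11 (le_of_lt hε1)
      have hN010 : 0 ≤ N01 := hN_nonneg _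
      have hN100 : 0 ≤ N10 := hN_nonneg _
      have hN110 : 0 ≤ N11 := hN_nonneg _
      refine bnd_aux c (N A) M _ _ _ _ hc hM0 ?_ ?_ ?_ ?_ ?_ ?_ step
      · calc |A 0 1| * N01 ≤ 2 * N01 := mul_le_mul_of_nonneg_right b1 hN010
          _ ≤ 2 * M := by linarith [hNM.2.1]
      · calc |A 1 0| * N10 ≤ 2 * N10 := mul_le_mul_of_nonneg_right b2 hN100
          _ ≤ 2 * M := by linarith [hNM.2.2.1]
      · calc |A 1 1| * N11 ≤ 1 * N11 := mul_le_mul_of_nonneg_right b3 hN110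
          _ ≤ M := by linarith [hNM.2.2.2]
      · exact mul_nonneg (abs_nonneg _) hN010
      · exact mul_nonneg (abs_nonneg _) hN100
      · exact mul_nonneg (abs_nonneg _) hN110
    have hNA : (1/ε - 2) * N00 ≤ c * N A + 5 * c^3 * M := by
      calc (1/ε - 2) * N00 ≤ |A 0 0| * N00 := mul_le_mul_of_nonneg_right hA00' hN000
        _ ≤ _ := hbound
    have hεeq : ε = Real.sqrt 2 * Real.sqrt (mcLoss A) := by
      rw [hε, Real.sqrt_mul (by norm_num)]
    have key2 : a / Real.sqrt (mcLoss A) = (1/ε) * N00 / c := by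
      rw [ha, hεeq]; ring
    have hfin : (1/ε) * N00 / c - (2 * N00 / c + 5 * c^2 * M) ≤ N A := by
      rw [sub_le_iff_le_add, div_le_iff₀ hc0]
      have hce : (N A + (2 * N00 / c + 5 * c ^ 2 * M)) * c
          = c * N A + 2 * N00 + 5 * c^3 * M := by
        field_simp; ring
      rw [hce]
      have : (1/ε) * N00 = (1/ε - 2) * N00 + 2 * N00 := by ring
      rw [this]
      linarith [hNA]
    have hslack : 2 * N00 / c + 5 * c^2 * M ≤ b := by
      have h1 : 2 * N00 / c ≤ 2 * M := by
        rw [div_le_iff₀ hc0]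
        nlinarith [hNM.1, hM0]
      have hc2 : (1:ℝ) ≤ c^2 := by nlinarith
      have h2 : 2 * M ≤ 2 * (c^2 * M) := by
        have := mul_le_mul_of_nonneg_right hc2 hM0
        linarith
      have hb8 : 8 * c^2 * M ≤ b := le_max_right _ _
      linarith
    rw [key2] at *
    linarith [hfin, hslack]

lemma psd_det_nonneg {n : Type*} [Fintype n] [DecidableEq n] {A : Matrix n n ℝ}
    (hA : A.PosSemidef) : 0 ≤ A.det := by
  rw [hA.isHermitian.det_eq_prod_eigenvalues]
  norm_cast
  exact Finset.prod_nonneg fun i _ => hA.eigenvalues_nonneg i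


section MDeriv
variable {m n p : Type*} [Fintype m] [Fintype n] [Fintype p]

def HasMDeriv (f : ℝ → Matrix m n ℝ) (f' : Matrix m n ℝ) (t : ℝ) : Prop :=
  ∀ i j, HasDerivAt (fun s => f s i j) (f' i j) t

lemma HasMDeriv.mul {f : ℝ → Matrix m n ℝ} {g : ℝ → Matrix n p ℝ} {f' : Matrix m n ℝ}
    {g' : Matrix n p ℝ} {t : ℝ} (hf : HasMDeriv f f' t) (hg : HasMDeriv g g' t) :
    HasMDeriv (fun s => f s * g s) (f' * g t + f t * g') t := by
  intro i j
  have h := HasDerivAt.fun_sum (u := Finset.univ)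
    (A := fun k s => f s i k * g s k j)
    (A' := fun k => f' i k * g t k j + f t i k * g' k j)
    (fun k _ => (hf i k).mul (hg k j))
  simpa only [Matrix.mul_apply, Matrix.add_apply, Finset.sum_add_distrib] using h

lemma HasMDeriv.transpose {f : ℝ → Matrix m n ℝ} {f' : Matrix m n ℝ} {t : ℝ}
    (hf : HasMDeriv f f' t) : HasMDeriv (fun s => (f s)ᵀ) f'ᵀ t := by
  intro i j
  simpa only [Matrix.transpose_apply] using hf j i

lemma HasMDeriv.sub {f g : ℝ → Matrix m n ℝ} {f' g' : Matrix m n ℝ} {t : ℝ}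
    (hf : HasMDeriv f f' t) (hg : HasMDeriv g g' t) :
    HasMDeriv (fun s => f s - g s) (f' - g') t := by
  intro i j
  simpa only [Matrix.sub_apply] using (hf i j).fun_sub (hg i j)

lemma HasMDeriv.congr_deriv {f : ℝ → Matrix m n ℝ} {f' g' : Matrix m n ℝ} {t : ℝ}
    (hf : HasMDeriv f f' t) (h : f' = g') : HasMDeriv f g' t := h ▸ hf

end MDeriv

/-- constancy from vanishing right derivative on `[0,∞)` -/
lemma const_of_deriv_zero (f : ℝ → ℝ) (hf : ∀ s : ℝ, 0 ≤ s → HasDerivAt f 0 s) :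
    ∀ t : ℝ, 0 ≤ t → f t = f 0 := by
  intro t ht
  have hcont : ContinuousOn f (Icc 0 t) := fun s hs =>
    ((hf s hs.1).continuousAt).continuousWithinAt
  exact constant_of_has_deriv_right_zero hcont
    (fun s hs => ((hf s hs.1).hasDerivWithinAt)) t (by constructor <;> linarith)

/-- positivity persists under `f' ≥ -K f` -/
lemma pos_persist (f g : ℝ → ℝ) (T Kb : ℝ) (hT : 0 ≤ T)
    (hf : ∀ s ∈ Icc 0 T, HasDerivAt f (g s) s)
    (hfnn : ∀ s ∈ Icc 0 T, 0 ≤ f s)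
    (hbd : ∀ s ∈ Icc 0 T, -Kb * f s ≤ g s)
    (h0 : 0 < f 0) : 0 < f T := by
  set φ : ℝ → ℝ := fun s => f s * Real.exp (Kb * s) with hφ
  have hφd : ∀ s ∈ Icc 0 T, HasDerivAt φ ((g s + Kb * f s) * Real.exp (Kb * s)) s := by
    intro s hs
    have he : HasDerivAt (fun u : ℝ => Real.exp (Kb * u)) (Kb * Real.exp (Kb * s)) s := by
      have h1 : HasDerivAt (fun u : ℝ => Kb * u) Kb s := by
        simpa using (hasDerivAt_id s).const_mul Kb
      simpa [mul_comm] using h1.exp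
    have := (hf s hs).fun_mul he
    exact this.congr_deriv (by ring)
  have hmono : MonotoneOn φ (Icc 0 T) := by
    apply monotoneOn_of_deriv_nonneg (convex_Icc 0 T)
    · exact fun s hs => ((hφd s hs).continuousAt).continuousWithinAt
    · intro s hs
      rw [interior_Icc] at hs
      exact ((hφd s (Ioo_subset_Icc_self hs)).differentiableAt).differentiableWithinAt
    · intro s hs
      rw [interior_Icc] at hs
      rw [(hφd s (Ioo_subset_Icc_self hs)).deriv]
      have h1 := hbd s (Ioo_subset_Icc_self hs)
      have h2 := Real.exp_pos (Kb * s)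
      nlinarith
  have h01 : φ 0 ≤ φ T := hmono (by constructor <;> linarith) (by constructor <;> linarith) hT
  have hφ0 : 0 < φ 0 := by
    simp only [hφ, mul_zero, Real.exp_zero, mul_one]; exact h0
  have hφT : 0 < φ T := lt_of_lt_of_le hφ0 h01
  by_contra h
  push_neg at h
  have : φ T ≤ 0 := mul_nonpos_of_nonpos_of_nonneg h (Real.exp_pos _).le
  linarith


lemma entry_sq_le (Mm : Matrix (Fin 2) (Fin 2) ℝ) (i j : Fin 2) :
    Mm i j ^ 2 ≤ (Mm * Mmᵀ) i i := by
  rw [Matrix.mul_apply, Fin.sum_univ_two]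
  simp only [Matrix.transpose_apply]
  fin_cases j <;> simp only [Fin.zero_eta, Fin.mk_one, Fin.isValue] <;>
    nlinarith [sq_nonneg (Mm i 0), sq_nonneg (Mm i 1)]

lemma delta_trace_id (A w g : Matrix (Fin 2) (Fin 2) ℝ) (hA : A 0 1 = A 1 0) :
    (-(gᵀ * w) + -(wᵀ * g)) 0 0 * A 1 1 + A 0 0 * (-(gᵀ * w) + -(wᵀ * g)) 1 1
      - ((-(gᵀ * w) + -(wᵀ * g)) 0 1 * A 1 0 + A 0 1 * (-(gᵀ * w) + -(wᵀ * g)) 1 0)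
    = -2 * ((A.adjugate * wᵀ) 0 0 * g 0 0 + (A.adjugate * wᵀ) 0 1 * g 1 0
        + (A.adjugate * wᵀ) 1 0 * g 0 1 + (A.adjugate * wᵀ) 1 1 * g 1 1) := by
  simp only [Matrix.mul_apply, Fin.sum_univ_two, Matrix.adjugate_fin_two, Matrix.add_apply,
    Matrix.neg_apply, Matrix.transpose_apply, Matrix.cons_val', Matrix.cons_val_zero,
    Matrix.cons_val_one, Matrix.head_cons, Matrix.head_fin_const, Matrix.empty_val',
    Matrix.cons_val_fin_one, Matrix.of_apply]
  rw [hA]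
  ring

end Helpers

set_option maxHeartbeats 1600000 in
/-- **Quasi-norms of the product matrix grow as the loss decreases.**
Gradient flow on a depth-`L` matrix factorization (`L ≥ 2`, endpoint dimensions `2`,
hidden dimensions `≥ 2`) for the 2×2 matrix-completion loss with balanced initialization
and `det(W_{L:1}(0)) > 0`: for any quasi-norm `N` with weakened-triangle constant `c ≥ 1`,
whenever `t ≥ 0` and `ℓ(t) > 0`,
`N(W_{L:1}(t)) ≥ a_N/√ℓ(t) − b_N`, where `a_N = N(e₁e₁ᵀ)/(√2 c)` and
`b_N = max{√2 a_N, 8c² maxᵢⱼ N(eᵢeⱼᵀ)}`.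
Factors are indexed `0,…,L−1` (so `W l` maps `ℝ^{d l} → ℝ^{d (l+1)}`);
`P l t = W_{l−1}(t)⋯W_0(t)` and `Q l t = W_{L−1}(t)⋯W_l(t)` are the partial products,
so the product matrix is `P L t`, identified with a 2×2 matrix via `reindex`. -/
theorem quasiNorm_lower_bound_deep_matrix_factorization
    (L : ℕ) (hL : 2 ≤ L)
    (d : ℕ → ℕ) (hd0 : d 0 = 2) (hdL : d L = 2)
    (hhid : ∀ l, 1 ≤ l → l ≤ L - 1 → 2 ≤ d l)
    (W : (l : ℕ) → ℝ → Matrix (Fin (d (l + 1))) (Fin (d l)) ℝ)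
    (P : (l : ℕ) → ℝ → Matrix (Fin (d l)) (Fin (d 0)) ℝ)
    (hP0 : ∀ t, P 0 t = 1)
    (hPs : ∀ l, l < L → ∀ t, P (l + 1) t = W l t * P l t)
    (Q : (l : ℕ) → ℝ → Matrix (Fin (d L)) (Fin (d l)) ℝ)
    (hQL : ∀ t, Q L t = 1)
    (hQs : ∀ l, l < L → ∀ t, Q l t = Q (l + 1) t * W l t)
    (hGF : ∀ l, l < L → ∀ t : ℝ, 0 ≤ t → ∀ i j,
      HasDerivAt (fun s => W l s i j)
        ((-((Q (l + 1) t)ᵀ *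
            Matrix.reindex (finCongr hdL).symm (finCongr hd0).symm
              (mcGrad (Matrix.reindex (finCongr hdL) (finCongr hd0) (P L t))) *
            (P l t)ᵀ)) i j) t)
    (hbal : ∀ l, l + 1 < L → (W (l + 1) 0)ᵀ * W (l + 1) 0 = W l 0 * (W l 0)ᵀ)
    (hdet : 0 < (Matrix.reindex (finCongr hdL) (finCongr hd0) (P L 0)).det)
    (N : Matrix (Fin 2) (Fin 2) ℝ → ℝ) (c : ℝ) (hc : 1 ≤ c)
    (hN_nonneg : ∀ A, 0 ≤ N A)
    (hN_zero : ∀ A, N A = 0 ↔ A = 0)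
    (hN_hom : ∀ (α : ℝ) (A), N (α • A) = |α| * N A)
    (hN_tri : ∀ A B, N (A + B) ≤ c * (N A + N B)) :
    ∀ t : ℝ, 0 ≤ t →
      0 < mcLoss (Matrix.reindex (finCongr hdL) (finCongr hd0) (P L t)) →
      N (Matrix.single 0 0 (1 : ℝ)) / (Real.sqrt 2 * c) /
          Real.sqrt (mcLoss (Matrix.reindex (finCongr hdL) (finCongr hd0) (P L t))) -
        max (Real.sqrt 2 * (N (Matrix.single 0 0 (1 : ℝ)) / (Real.sqrt 2 * c)))
          (8 * c ^ 2 *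
            max (max (N (Matrix.single 0 0 (1 : ℝ))) (N (Matrix.single 0 1 (1 : ℝ))))
              (max (N (Matrix.single 1 0 (1 : ℝ))) (N (Matrix.single 1 1 (1 : ℝ))))) ≤
      N (Matrix.reindex (finCongr hdL) (finCongr hd0) (P L t)) := by
  set e0 : Fin (d 0) ≃ Fin 2 := finCongr hd0 with he0
  set eL : Fin (d L) ≃ Fin 2 := finCongr hdL with heL
  set Gm : ℝ → Matrix (Fin (d L)) (Fin (d 0)) ℝ :=
    fun s => Matrix.reindex eL.symm e0.symm (mcGrad (Matrix.reindex eL e0 (P L s))) with hGm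
  set Ch : ℝ → Matrix (Fin 2) (Fin 2) ℝ :=
    fun s => Matrix.reindex e0 e0 ((W 0 s)ᵀ * W 0 s) with hCh
  set Dmf : ℝ → Matrix (Fin 2) (Fin 2) ℝ :=
    fun s => -((mcGrad (Matrix.reindex eL e0 (P L s)))ᵀ * Matrix.reindex eL e0 (P L s))
      + -((Matrix.reindex eL e0 (P L s))ᵀ * mcGrad (Matrix.reindex eL e0 (P L s))) with hDmf
  set δf : ℝ → ℝ := fun s => Dmf s 0 0 * Ch s 1 1 + Ch s 0 0 * Dmf s 1 1
      - (Dmf s 0 1 * Ch s 1 0 + Ch s 0 1 * Dmf s 1 0) with hδf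
  set Kf : ℝ → ℝ := fun s => 2 * ∑ i : Fin 2, ∑ j : Fin 2,
      Real.sqrt ((Ch s ^ (L - 2)) i i) * |mcGrad (Matrix.reindex eL e0 (P L s)) j i| with hKf
  -- (1) matrix-level gradient flow
  have hW : ∀ l, l < L → ∀ s : ℝ, 0 ≤ s →
      HasMDeriv (W l) (-((Q (l + 1) s)ᵀ * Gm s * (P l s)ᵀ)) s := by
    intro l hl s hs i j
    exact hGF l hl s hs i j
  -- (2) continuity of the entries of the factors
  have hcW : ∀ l, l < L → ∀ (i : Fin (d (l + 1))) (j : Fin (d l)),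
      ContinuousOn (fun s => W l s i j) (Set.Ici 0) := by
    intro l hl i j s hs
    exact ((hGF l hl s hs i j).continuousAt).continuousWithinAt
  -- (3) continuity of the entries of the partial products
  have hcP : ∀ l, l ≤ L → ∀ (i : Fin (d l)) (j : Fin (d 0)),
      ContinuousOn (fun s => P l s i j) (Set.Ici 0) := by
    intro l
    induction l with
    | zero =>
      intro _ i j
      have h : (fun s => P 0 s i j) = fun _ => (1 : Matrix (Fin (d 0)) (Fin (d 0)) ℝ) i j := by
        funext s; rw [hP0]
      rw [h]; exact continuousOn_const
    | succ l ih =>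
      intro hl i j
      have hlL : l < L := by omega
      have h : (fun s => P (l + 1) s i j) = fun s => ∑ k, W l s i k * P l s k j := by
        funext s; rw [hPs l hlL s, Matrix.mul_apply]
      rw [h]
      exact continuousOn_finset_sum _ fun k _ => (hcW l hlL i k).mul (ih (by omega) k j)
  -- (4) balancedness persists
  have hbalt : ∀ l, l + 1 < L → ∀ s : ℝ, 0 ≤ s →
      (W (l + 1) s)ᵀ * W (l + 1) s = W l s * (W l s)ᵀ := by
    intro l hl s hs
    have hlL : l < L := by omega
    have hder : ∀ u : ℝ, 0 ≤ u →
        HasMDeriv (fun r => (W (l + 1) r)ᵀ * W (l + 1) r - W l r * (W l r)ᵀ) 0 u := by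
      intro u hu
      have h2 := hW (l + 1) hl u hu
      have h1 := hW l hlL u hu
      have hd := (h2.transpose.mul h2).sub (h1.mul h1.transpose)
      refine hd.congr_deriv ?_
      rw [hQs (l + 1) hl u, hPs l hlL u]
      simp only [Matrix.transpose_neg, Matrix.transpose_mul, Matrix.transpose_transpose,
        Matrix.neg_mul, Matrix.mul_neg, Matrix.mul_assoc]
      abel
    have hzero : (W (l + 1) s)ᵀ * W (l + 1) s - W l s * (W l s)ᵀ = 0 := by
      ext i j
      have hcst := const_of_deriv_zero
        (fun r => ((W (l + 1) r)ᵀ * W (l + 1) r - W l r * (W l r)ᵀ) i j)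
        (fun u hu => by simpa using hder u hu i j) s hs
      have h0 : (W (l + 1) 0)ᵀ * W (l + 1) 0 - W l 0 * (W l 0)ᵀ = 0 := by
        rw [hbal l hl]; exact sub_self _
      have hcst' : ((W (l + 1) s)ᵀ * W (l + 1) s - W l s * (W l s)ᵀ) i j
          = ((W (l + 1) 0)ᵀ * W (l + 1) 0 - W l 0 * (W l 0)ᵀ) i j := hcst
      rw [h0] at hcst'
      simpa using hcst'
    exact sub_eq_zero.mp hzero
  -- (5) the full product equals Q 0
  have hQ0P : ∀ s : ℝ, Q 0 s = P L s := by
    intro s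
    have key : ∀ k, k ≤ L → Q (L - k) s * P (L - k) s = P L s := by
      intro k
      induction k with
      | zero => intro _; rw [Nat.sub_zero, hQL s, Matrix.one_mul]
      | succ n ih =>
        intro hk
        have h1 : L - (n + 1) < L := by omega
        have h2 : L - (n + 1) + 1 = L - n := by omega
        rw [hQs _ h1 s, Matrix.mul_assoc, ← hPs _ h1 s, h2]
        exact ih (by omega)
    have h := key L le_rfl
    rw [Nat.sub_self, hP0 s, Matrix.mul_one] at h
    exact h
  -- (6) Gram matrix of the product is a power of the first-layer Gram matrix
  have hPPbig : ∀ s : ℝ, 0 ≤ s → ∀ l, l ≤ L →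
      (P l s)ᵀ * P l s = ((W 0 s)ᵀ * W 0 s) ^ l := by
    intro s hs
    have hU : ∀ l, l < L → (W l s)ᵀ * W l s * P l s = P l s * ((W 0 s)ᵀ * W 0 s) := by
      intro l
      induction l with
      | zero => intro _; rw [hP0 s, Matrix.mul_one, Matrix.one_mul]
      | succ l ih =>
        intro hl
        have hlL : l < L := by omega
        rw [hbalt l hl s hs, hPs l hlL s, Matrix.mul_assoc, ← Matrix.mul_assoc ((W l s)ᵀ),
          ih hlL, ← Matrix.mul_assoc]
    intro l
    induction l with
    | zero =>
      intro _
      rw [hP0 s, Matrix.transpose_one, Matrix.one_mul, pow_zero]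
    | succ l ih =>
      intro hl
      have hlL : l < L := by omega
      rw [hPs l hlL s, Matrix.transpose_mul, Matrix.mul_assoc, ← Matrix.mul_assoc ((W l s)ᵀ),
        hU l hlL, ← Matrix.mul_assoc, ih (by omega), ← pow_succ]
  -- (7) 2×2 consequences
  have hWhC : ∀ s : ℝ, 0 ≤ s →
      (Matrix.reindex eL e0 (P L s))ᵀ * Matrix.reindex eL e0 (P L s) = Ch s ^ L := by
    intro s hs
    rw [Matrix.transpose_reindex, Matrix.reindex_apply, Matrix.reindex_apply,
      Matrix.submatrix_mul_equiv ((P L s)ᵀ) (P L s) (⇑e0.symm) eL.symm (⇑e0.symm),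
      hPPbig s hs L le_rfl, ← Matrix.reindex_apply, hCh]
    have h := map_pow (Matrix.reindexAlgEquiv ℝ ℝ e0) ((W 0 s)ᵀ * W 0 s) L
    simpa [Matrix.reindexAlgEquiv_apply] using h
  have hChV : ∀ s : ℝ, Ch s =
      ((W 0 s).submatrix id ⇑e0.symm)ᵀ * ((W 0 s).submatrix id ⇑e0.symm) := by
    intro s
    rw [Matrix.transpose_submatrix]
    have h := Matrix.submatrix_mul_equiv ((W 0 s)ᵀ) (W 0 s) (⇑e0.symm)
      (Equiv.refl (Fin (d (0 + 1)))) (⇑e0.symm)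
    simp only [Equiv.coe_refl] at h
    rw [h]
    simp [hCh, Matrix.reindex_apply]
  have hPSDg : ∀ s : ℝ, (Ch s).PosSemidef := by
    intro s
    rw [hChV s]
    simpa using Matrix.posSemidef_conjTranspose_mul_self ((W 0 s).submatrix id ⇑e0.symm)
  have hdet0 : ∀ s : ℝ, 0 ≤ (Ch s).det := fun s => psd_det_nonneg (hPSDg s)
  have hsymCh : ∀ s : ℝ, (Ch s)ᵀ = Ch s := by
    intro s
    have h := (hPSDg s).1
    exact (by simpa using h : (Ch s).IsSymm)
  -- (8) derivative of the first-layer Gram matrix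
  have hChd : ∀ s : ℝ, 0 ≤ s → HasMDeriv Ch (Dmf s) s := by
    intro s hs
    have hV : HasMDeriv (fun r => (W 0 r).submatrix id ⇑e0.symm)
        ((-((Q (0 + 1) s)ᵀ * Gm s * (P 0 s)ᵀ)).submatrix id ⇑e0.symm) s := by
      intro i j
      exact hW 0 (by omega) s hs i (e0.symm j)
    have hd := (hV.transpose).mul hV
    have hfun : Ch = fun r => ((W 0 r).submatrix id ⇑e0.symm)ᵀ * ((W 0 r).submatrix id ⇑e0.symm) :=
      funext hChV
    rw [hfun]
    refine hd.congr_deriv ?_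
    -- step A : inner identity in the d-world
    have hA : (-((Q (0 + 1) s)ᵀ * Gm s * (P 0 s)ᵀ))ᵀ * W 0 s = -((Gm s)ᵀ * P L s) := by
      rw [hP0 s, Matrix.transpose_one, Matrix.mul_one, Matrix.transpose_neg,
        Matrix.transpose_mul, Matrix.transpose_transpose, Matrix.neg_mul, Matrix.mul_assoc,
        ← hQs 0 (by omega) s, hQ0P s]
    -- step B : transport to the 2×2 world
    have hGsub : Gm s = (mcGrad (Matrix.reindex eL e0 (P L s))).submatrix ⇑eL ⇑e0 := by
      rw [hGm, Matrix.reindex_apply]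
      simp
    have hPLsub : P L s = (Matrix.reindex eL e0 (P L s)).submatrix ⇑eL ⇑e0 := by
      rw [Matrix.reindex_apply, Matrix.submatrix_submatrix, Equiv.symm_comp_self,
        Equiv.symm_comp_self, Matrix.submatrix_id_id]
    have hB : (-((Gm s)ᵀ * P L s)).submatrix ⇑e0.symm ⇑e0.symm =
        -((mcGrad (Matrix.reindex eL e0 (P L s)))ᵀ * Matrix.reindex eL e0 (P L s)) := by
      rw [hGsub, hPLsub, Matrix.transpose_submatrix,
        Matrix.submatrix_mul_equiv _ _ (⇑e0) eL (⇑e0)]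
      ext i j
      simp [Matrix.submatrix_apply]
    -- step C : first summand
    have hX1 : ((-((Q (0 + 1) s)ᵀ * Gm s * (P 0 s)ᵀ)).submatrix id ⇑e0.symm)ᵀ *
        ((W 0 s).submatrix id ⇑e0.symm) =
        -((mcGrad (Matrix.reindex eL e0 (P L s)))ᵀ * Matrix.reindex eL e0 (P L s)) := by
      rw [Matrix.transpose_submatrix]
      have h := Matrix.submatrix_mul_equiv ((-((Q (0 + 1) s)ᵀ * Gm s * (P 0 s)ᵀ))ᵀ) (W 0 s)
        (⇑e0.symm) (Equiv.refl (Fin (d (0 + 1)))) (⇑e0.symm)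
      simp only [Equiv.coe_refl] at h
      rw [h, hA, hB]
    have hX2 : ((W 0 s).submatrix id ⇑e0.symm)ᵀ *
        ((-((Q (0 + 1) s)ᵀ * Gm s * (P 0 s)ᵀ)).submatrix id ⇑e0.symm) =
        -((Matrix.reindex eL e0 (P L s))ᵀ * mcGrad (Matrix.reindex eL e0 (P L s))) := by
      calc ((W 0 s).submatrix id ⇑e0.symm)ᵀ *
            ((-((Q (0 + 1) s)ᵀ * Gm s * (P 0 s)ᵀ)).submatrix id ⇑e0.symm)
          = (((-((Q (0 + 1) s)ᵀ * Gm s * (P 0 s)ᵀ)).submatrix id ⇑e0.symm)ᵀ *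
              ((W 0 s).submatrix id ⇑e0.symm))ᵀ := by
            rw [Matrix.transpose_mul, Matrix.transpose_transpose]
        _ = (-((mcGrad (Matrix.reindex eL e0 (P L s)))ᵀ * Matrix.reindex eL e0 (P L s)))ᵀ := by
            rw [hX1]
        _ = -((Matrix.reindex eL e0 (P L s))ᵀ * mcGrad (Matrix.reindex eL e0 (P L s))) := by
            rw [Matrix.transpose_neg, Matrix.transpose_mul, Matrix.transpose_transpose]
    rw [hDmf, hX1, hX2]
  -- (9) derivative of the determinant
  have hdetd : ∀ s : ℝ, 0 ≤ s → HasDerivAt (fun u => (Ch u).det) (δf s) s := by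
    intro s hs
    have h := ((hChd s hs 0 0).mul (hChd s hs 1 1)).sub ((hChd s hs 0 1).mul (hChd s hs 1 0))
    have hfun : (fun u => (Ch u).det) = fun u => Ch u 0 0 * Ch u 1 1 - Ch u 0 1 * Ch u 1 0 := by
      funext u; rw [Matrix.det_fin_two]
    rw [hfun, hδf]
    exact h
  -- (10) lower bound on the derivative of the determinant
  have hδb : ∀ s : ℝ, 0 ≤ s → -(Kf s) * (Ch s).det ≤ δf s := by
    intro s hs
    have hsymA : (Ch s)ᵀ = Ch s := hsymCh s
    have h01 : Ch s 0 1 = Ch s 1 0 := by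
      calc Ch s 0 1 = (Ch s)ᵀ 1 0 := rfl
        _ = Ch s 1 0 := by rw [hsymA]
    have hMMt : ((Ch s).adjugate * (Matrix.reindex eL e0 (P L s))ᵀ) *
        ((Ch s).adjugate * (Matrix.reindex eL e0 (P L s))ᵀ)ᵀ =
        ((Ch s).det ^ 2) • (Ch s ^ (L - 2)) := by
      rw [Matrix.transpose_mul, Matrix.transpose_transpose, Matrix.adjugate_transpose, hsymA,
        Matrix.mul_assoc, ← Matrix.mul_assoc ((Matrix.reindex eL e0 (P L s))ᵀ), hWhC s hs]
      have hird : Ch s ^ L = Ch s * (Ch s ^ (L - 2) * Ch s) := by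
        rw [← pow_succ, ← pow_succ']
        congr 1
        omega
      rw [hird, ← Matrix.mul_assoc ((Ch s).adjugate), ← Matrix.mul_assoc ((Ch s).adjugate),
        Matrix.adjugate_mul, Matrix.smul_mul, Matrix.one_mul, Matrix.smul_mul,
        Matrix.mul_assoc (Ch s ^ (L - 2)), Matrix.mul_adjugate, Matrix.mul_smul,
        Matrix.mul_one, smul_smul, sq]
    have hMb : ∀ i j : Fin 2, |((Ch s).adjugate * (Matrix.reindex eL e0 (P L s))ᵀ) i j| ≤
        (Ch s).det * Real.sqrt ((Ch s ^ (L - 2)) i i) := by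
      intro i j
      have h1 := entry_sq_le ((Ch s).adjugate * (Matrix.reindex eL e0 (P L s))ᵀ) i j
      rw [hMMt, Matrix.smul_apply, smul_eq_mul] at h1
      rw [← Real.sqrt_sq_eq_abs]
      calc Real.sqrt ((((Ch s).adjugate * (Matrix.reindex eL e0 (P L s))ᵀ) i j) ^ 2)
          ≤ Real.sqrt ((Ch s).det ^ 2 * (Ch s ^ (L - 2)) i i) := Real.sqrt_le_sqrt h1
        _ = Real.sqrt ((Ch s).det ^ 2) * Real.sqrt ((Ch s ^ (L - 2)) i i) :=
            Real.sqrt_mul (sq_nonneg _) _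
        _ = (Ch s).det * Real.sqrt ((Ch s ^ (L - 2)) i i) := by
            rw [Real.sqrt_sq (hdet0 s)]
    have hδid : δf s = -2 *
        ((((Ch s).adjugate * (Matrix.reindex eL e0 (P L s))ᵀ) 0 0 *
            mcGrad (Matrix.reindex eL e0 (P L s)) 0 0 +
          ((Ch s).adjugate * (Matrix.reindex eL e0 (P L s))ᵀ) 0 1 *
            mcGrad (Matrix.reindex eL e0 (P L s)) 1 0 +
          ((Ch s).adjugate * (Matrix.reindex eL e0 (P L s))ᵀ) 1 0 *
            mcGrad (Matrix.reindex eL e0 (P L s)) 0 1 +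
          ((Ch s).adjugate * (Matrix.reindex eL e0 (P L s))ᵀ) 1 1 *
            mcGrad (Matrix.reindex eL e0 (P L s)) 1 1)) := by
      rw [hδf, hDmf]
      exact delta_trace_id (Ch s) (Matrix.reindex eL e0 (P L s))
        (mcGrad (Matrix.reindex eL e0 (P L s))) h01
    have hterm : ∀ i j : Fin 2,
        ((Ch s).adjugate * (Matrix.reindex eL e0 (P L s))ᵀ) i j *
            mcGrad (Matrix.reindex eL e0 (P L s)) j i ≤
          (Ch s).det * (Real.sqrt ((Ch s ^ (L - 2)) i i) *
            |mcGrad (Matrix.reindex eL e0 (P L s)) j i|) := by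
      intro i j
      have h2 := mul_le_mul_of_nonneg_right (hMb i j)
        (abs_nonneg (mcGrad (Matrix.reindex eL e0 (P L s)) j i))
      calc ((Ch s).adjugate * (Matrix.reindex eL e0 (P L s))ᵀ) i j *
            mcGrad (Matrix.reindex eL e0 (P L s)) j i
          ≤ |((Ch s).adjugate * (Matrix.reindex eL e0 (P L s))ᵀ) i j *
              mcGrad (Matrix.reindex eL e0 (P L s)) j i| := le_abs_self _
        _ = |((Ch s).adjugate * (Matrix.reindex eL e0 (P L s))ᵀ) i j| *
              |mcGrad (Matrix.reindex eL e0 (P L s)) j i| := abs_mul _ _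
        _ ≤ ((Ch s).det * Real.sqrt ((Ch s ^ (L - 2)) i i)) *
              |mcGrad (Matrix.reindex eL e0 (P L s)) j i| := h2
        _ = (Ch s).det * (Real.sqrt ((Ch s ^ (L - 2)) i i) *
              |mcGrad (Matrix.reindex eL e0 (P L s)) j i|) := by ring
    rw [hδid]
    simp only [hKf, Fin.sum_univ_two]
    have t00 := hterm 0 0
    have t01 := hterm 0 1
    have t10 := hterm 1 0
    have t11 := hterm 1 1
    nlinarith [t00, t01, t10, t11]
  -- (11) continuity of Kf
  have hcCh : ∀ (i j : Fin 2), ContinuousOn (fun s => Ch s i j) (Set.Ici 0) := by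
    intro i j
    have h : (fun s => Ch s i j) = fun s => ∑ k, W 0 s k (e0.symm i) * W 0 s k (e0.symm j) := by
      funext s
      rw [hCh]
      simp [Matrix.reindex_apply, Matrix.submatrix_apply, Matrix.mul_apply,
        Matrix.transpose_apply]
    rw [h]
    exact continuousOn_finset_sum _ fun k _ => (hcW 0 (by omega) k _).mul (hcW 0 (by omega) k _)
  have hcChPow : ∀ (k : ℕ) (i j : Fin 2), ContinuousOn (fun s => (Ch s ^ k) i j) (Set.Ici 0) := by
    intro k
    induction k with
    | zero => intro i j; simp only [pow_zero]; exact continuousOn_const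
    | succ k ih =>
      intro i j
      have h : (fun s => (Ch s ^ (k + 1)) i j) = fun s => ∑ m, (Ch s ^ k) i m * Ch s m j := by
        funext s; rw [pow_succ, Matrix.mul_apply]
      rw [h]
      exact continuousOn_finset_sum _ fun m _ => (ih i m).mul (hcCh m j)
  have hcWh : ∀ (i j : Fin 2),
      ContinuousOn (fun s => (Matrix.reindex eL e0 (P L s)) i j) (Set.Ici 0) := by
    intro i j
    have h : (fun s => (Matrix.reindex eL e0 (P L s)) i j)
        = fun s => P L s (eL.symm i) (e0.symm j) := by
      funext s; rw [Matrix.reindex_apply]; rfl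
    rw [h]; exact hcP L le_rfl _ _
  have hcG : ∀ (i j : Fin 2),
      ContinuousOn (fun s => mcGrad (Matrix.reindex eL e0 (P L s)) i j) (Set.Ici 0) := by
    intro i j
    fin_cases i <;> fin_cases j <;>
      simp only [mcGrad, Matrix.cons_val', Matrix.cons_val_zero, Matrix.cons_val_one,
        Matrix.head_cons, Matrix.head_fin_const, Matrix.empty_val', Matrix.cons_val_fin_one,
        Matrix.of_apply, Fin.zero_eta, Fin.mk_one, Fin.isValue]
    · exact continuousOn_const
    · exact (hcWh 0 1).sub continuousOn_const
    · exact (hcWh 1 0).sub continuousOn_const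
    · exact hcWh 1 1
  have hcK : ContinuousOn Kf (Set.Ici 0) := by
    rw [hKf]
    apply ContinuousOn.mul continuousOn_const
    apply continuousOn_finset_sum
    intro i _
    apply continuousOn_finset_sum
    intro j _
    exact (Real.continuous_sqrt.comp_continuousOn (hcChPow (L - 2) i i)).mul
      (continuous_abs.comp_continuousOn (hcG j i))
  -- (12) determinant of the Gram matrix stays positive
  have hdetCh0 : 0 < (Ch 0).det := by
    by_contra hcon
    push_neg at hcon
    have h0 : (Ch 0).det = 0 := le_antisymm hcon (hdet0 0)
    have hsq : ((Matrix.reindex eL e0 (P L 0)).det) ^ 2 = (Ch 0).det ^ L := by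
      conv_rhs => rw [← Matrix.det_pow]
      rw [← hWhC 0 le_rfl, Matrix.det_mul, Matrix.det_transpose, sq]
    rw [h0, zero_pow (by omega)] at hsq
    have hz : (Matrix.reindex eL e0 (P L 0)).det = 0 := by
      have := sq_eq_zero_iff.mp hsq
      exact this
    rw [hz] at hdet
    exact lt_irrefl 0 hdet
  have hdetChpos : ∀ s : ℝ, 0 ≤ s → 0 < (Ch s).det := by
    intro s hs
    obtain ⟨Kb, hKb⟩ := (isCompact_Icc (a := (0 : ℝ)) (b := s)).exists_bound_of_continuousOn
      (hcK.mono (fun u hu => hu.1))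
    apply pos_persist (fun u => (Ch u).det) δf s Kb hs
    · intro u hu; exact hdetd u hu.1
    · intro u _; exact hdet0 u
    · intro u hu
      have h1 := hδb u hu.1
      have h2 : Kf u ≤ Kb := le_trans (le_abs_self _)
        (by simpa [Real.norm_eq_abs] using hKb u hu)
      have h3 : -Kb * (Ch u).det ≤ -(Kf u) * (Ch u).det :=
        mul_le_mul_of_nonneg_right (by linarith) (hdet0 u)
      linarith
    · exact hdetCh0
  -- (13)/(14) the determinant of the product matrix is positive
  have hne : ∀ s : ℝ, 0 ≤ s → (Matrix.reindex eL e0 (P L s)).det ≠ 0 := by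
    intro s hs h0
    have hsq : ((Matrix.reindex eL e0 (P L s)).det) ^ 2 = (Ch s).det ^ L := by
      conv_rhs => rw [← Matrix.det_pow]
      rw [← hWhC s hs, Matrix.det_mul, Matrix.det_transpose, sq]
    rw [h0] at hsq
    have hpos := pow_pos (hdetChpos s hs) L
    rw [← hsq] at hpos
    simp at hpos
  have hdetWh : ∀ s : ℝ, 0 ≤ s → 0 < (Matrix.reindex eL e0 (P L s)).det := by
    intro s hs
    rcases lt_trichotomy ((Matrix.reindex eL e0 (P L s)).det) 0 with hlt | heq | hgt
    · exfalso
      have hcont : ContinuousOn (fun u => (Matrix.reindex eL e0 (P L u)).det) (Set.Icc 0 s) := by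
        have h : (fun u => (Matrix.reindex eL e0 (P L u)).det)
            = fun u => (Matrix.reindex eL e0 (P L u)) 0 0 * (Matrix.reindex eL e0 (P L u)) 1 1
              - (Matrix.reindex eL e0 (P L u)) 0 1 * (Matrix.reindex eL e0 (P L u)) 1 0 := by
          funext u; rw [Matrix.det_fin_two]
        rw [h]
        have hIcc : Set.Icc (0 : ℝ) s ⊆ Set.Ici 0 := fun u hu => hu.1
        exact (((hcWh 0 0).mono hIcc).mul ((hcWh 1 1).mono hIcc)).sub
          (((hcWh 0 1).mono hIcc).mul ((hcWh 1 0).mono hIcc))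
      have hmem : (0 : ℝ) ∈ Set.Icc ((Matrix.reindex eL e0 (P L s)).det)
          ((Matrix.reindex eL e0 (P L 0)).det) := ⟨le_of_lt hlt, le_of_lt hdet⟩
      obtain ⟨u, hu, hu0⟩ := intermediate_value_Icc' hs hcont hmem
      exact hne u hu.1 hu0
    · exact absurd heq (hne s hs)
    · exact hgt
  -- (15) conclude with the 2×2 quasi-norm bound
  intro t ht hloss
  exact mc_final _ (hdetWh t ht) hloss N c hc hN_nonneg hN_hom hN_tri
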